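/- Let ψ(z) = ∑_{k=0}^{n} a_k z^k be a real polynomial with all zeros real and negative, with a_k = 0 for k outside {0,...,n}, and fix a positive integer p. Then every coefficient L_k^p = C(2p-1,p) a_k^2 + ∑_{j=1}^{p} (-1)^j C(2p,p-j) a_{k-j} a_{k+j}, for 0 ≤ k ≤ n, is nonnegative. -/

import Mathlib

open LaurentPolynomial Finset

namespace LkpAux

noncomputable def Kp (p q : ℕ) : LaurentPolynomial ℝ :=
  (-1 : LaurentPolynomial ℝ)^p * (T 1 - T (-1))^(2*p) * (T 1 + T (-1))^q

noncomputable def kap (p q : ℕ) (d : ℤ) : ℝ := (Kp p q).coeff d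

lemma coeff_mul_T (f : LaurentPolynomial ℝ) (n d : ℤ) :
    (f * T n : LaurentPolynomial ℝ).coeff d = f.coeff (d - n) := by
  have h := AddMonoidAlgebra.coeff_mul_single_apply f (1:ℝ) n d
  rw [mul_one, ← sub_eq_add_neg] at h
  exact h

lemma kap_rec (p q : ℕ) (d : ℤ) : kap p (q+1) d = kap p q (d-1) + kap p q (d+1) := by
  have h : Kp p (q+1) = Kp p q * T 1 + Kp p q * T (-1) := by
    unfold Kp; ring
  unfold kap
  rw [h, AddMonoidAlgebra.coeff_add, Finsupp.add_apply, coeff_mul_T, coeff_mul_T, sub_neg_eq_add]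

lemma kap_sos (p : ℕ) (r : ℕ) : 0 ≤ kap p (2*r) 0 := by
  classical
  set F : LaurentPolynomial ℝ := (T 1 - T (-1))^p * (T 1 + T (-1))^r with hF
  have hinv : invert F = (-1 : LaurentPolynomial ℝ)^p * F := by
    rw [hF, map_mul, map_pow, map_pow, map_sub, map_add, invert_T, invert_T, neg_neg,
      show (T (-1) - T 1 : LaurentPolynomial ℝ) = -(T 1 - T (-1)) by ring, neg_pow]
    ring
  have hKp : Kp p (2*r) = F * invert F := by
    rw [hinv, hF]; unfold Kp; ring
  have h2 : 0 ≤ (F * invert F : LaurentPolynomial ℝ).coeff 0 := by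
    rw [AddMonoidAlgebra.coeff_mul]
    refine Finset.sum_nonneg fun a₁ _ => Finset.sum_nonneg fun a₂ _ => ?_
    dsimp only
    split_ifs with h
    · have ha : -a₂ = a₁ := by omega
      rw [invert_apply, ha]
      exact mul_self_nonneg _
    · exact le_rfl
  unfold kap
  rw [hKp]
  exact h2

end LkpAux

namespace LkpAux2
open LkpAux

def sg (j : ℤ) : ℝ := if Even j then 1 else -1

noncomputable def chR (p : ℕ) (t : ℤ) : ℝ := if 0 ≤ t then ((2*p).choose t.toNat : ℝ) else 0

lemma Kp_zero (p : ℕ) : Kp p 0 = ∑ m ∈ Finset.range (2*p+1),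
    LaurentPolynomial.C ((-1:ℝ)^(p+m) * ((2*p).choose m)) * T (2*(m:ℤ) - 2*p) := by
  rw [Kp, pow_zero, mul_one, sub_pow, Finset.mul_sum]
  refine Finset.sum_congr rfl fun m hm => ?_
  rw [Finset.mem_range] at hm
  have hm' : m ≤ 2*p := by omega
  rw [T_pow, T_pow]
  have h1 : (-1 : LaurentPolynomial ℝ) = LaurentPolynomial.C (-1 : ℝ) := by
    rw [map_neg, map_one]
  have h2 : (((2*p).choose m : ℕ) : LaurentPolynomial ℝ)
      = LaurentPolynomial.C (((2*p).choose m : ℕ) : ℝ) := by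
    rw [map_natCast]
  have h3 : (T ((m:ℤ) * 1) * T (((2*p - m : ℕ) : ℤ) * (-1)) : LaurentPolynomial ℝ)
      = T (2*(m:ℤ) - 2*p) := by
    rw [← T_add]
    congr 1
    push_cast [Nat.cast_sub hm']
    ring
  rw [h1, h2, ← map_pow, ← map_pow]
  calc LaurentPolynomial.C ((-1:ℝ)^p) *
        (LaurentPolynomial.C ((-1:ℝ)^(m+2*p)) * T ((m:ℤ)*1) * T (((2*p - m : ℕ):ℤ)*(-1)) *
          LaurentPolynomial.C (((2*p).choose m : ℕ) : ℝ))
      = LaurentPolynomial.C ((-1:ℝ)^p * (-1:ℝ)^(m+2*p) * (((2*p).choose m : ℕ) : ℝ)) *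
          (T ((m:ℤ)*1) * T (((2*p - m : ℕ):ℤ)*(-1))) := by
        rw [map_mul, map_mul]; ring
    _ = LaurentPolynomial.C ((-1:ℝ)^(p+m) * ((2*p).choose m)) * T (2*(m:ℤ) - 2*p) := by
        rw [h3]
        congr 2
        rw [← pow_add]
        have : p + (m + 2*p) = (p + m) + 2*p := by ring
        rw [this, pow_add]
        simp [pow_mul]

lemma kap_zero_apply (p : ℕ) (d : ℤ) : kap p 0 d = ∑ m ∈ Finset.range (2*p+1),
    (if 2*(m:ℤ) - 2*p = d then ((-1:ℝ)^(p+m) * ((2*p).choose m)) else 0) := by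
  rw [kap, Kp_zero, AddMonoidAlgebra.coeff_sum, Finsupp.finset_sum_apply]
  refine Finset.sum_congr rfl fun m _ => ?_
  rw [← single_eq_C_mul_T, AddMonoidAlgebra.coeff_single, Finsupp.single_apply]

lemma kap_zero_odd (p : ℕ) (d : ℤ) (hd : ¬ Even d) : kap p 0 d = 0 := by
  rw [kap_zero_apply]
  refine Finset.sum_eq_zero fun m _ => ?_
  rw [if_neg]
  intro h
  exact hd ⟨(m:ℤ) - p, by omega⟩

lemma sg_natCast (a : ℕ) : sg (a : ℤ) = (-1:ℝ)^a := by
  unfold sg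
  by_cases h : Even a
  · rw [if_pos (by exact_mod_cast h), h.neg_one_pow]
  · rw [if_neg (by exact_mod_cast h), (Nat.not_even_iff_odd.mp h).neg_one_pow]

lemma sg_congr (x y : ℤ) (h : (x - y) % 2 = 0) : sg x = sg y := by
  unfold sg
  have hiff : Even x ↔ Even y := by
    rw [Int.even_iff, Int.even_iff]; omega
  exact if_congr hiff rfl rfl

lemma sg_neg (j : ℤ) : sg (-j) = sg j := by
  unfold sg
  simp [even_neg]

lemma kap_zero_even (p : ℕ) (j : ℤ) : kap p 0 (2*j) = sg j * chR p (p + j) := by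
  rw [kap_zero_apply]
  by_cases hj : 0 ≤ (p:ℤ) + j ∧ (p:ℤ) + j ≤ 2*p
  · have hmem : ((p:ℤ)+j).toNat ∈ Finset.range (2*p+1) := by
      rw [Finset.mem_range]; omega
    have htn : ((((p:ℤ)+j).toNat : ℕ) : ℤ) = (p:ℤ) + j := Int.toNat_of_nonneg hj.1
    rw [Finset.sum_eq_single_of_mem _ hmem]
    · rw [if_pos (by omega)]
      have hsign : (-1:ℝ)^(p + ((p:ℤ)+j).toNat) = sg j := by
        rw [← sg_natCast]
        apply sg_congr
        push_cast
        omega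
      rw [hsign, chR, if_pos hj.1]
    · intro m hm hne
      rw [if_neg]
      intro h
      apply hne
      have : (m : ℤ) = (p:ℤ) + j := by omega
      omega
  · rw [Finset.sum_eq_zero]
    · rw [chR]
      by_cases h0 : 0 ≤ (p:ℤ) + j
      · rw [if_pos h0, Nat.choose_eq_zero_of_lt (by omega), Nat.cast_zero, mul_zero]
      · rw [if_neg h0, mul_zero]
    · intro m hm
      rw [if_neg]
      intro h
      rw [Finset.mem_range] at hm
      omega

end LkpAux2

section PartB
open LkpAux LkpAux2 Finset

lemma kap_parity (p : ℕ) : ∀ (q : ℕ) (d : ℤ), ¬ Even (d + q) → kap p q d = 0 := by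
  intro q
  induction q with
  | zero =>
    intro d hd
    apply kap_zero_odd
    simpa using hd
  | succ q ih =>
    intro d hd
    rw [kap_rec]
    rw [ih (d-1) (by rw [Int.even_iff] at hd ⊢; push_cast at hd ⊢; omega),
        ih (d+1) (by rw [Int.even_iff] at hd ⊢; push_cast at hd ⊢; omega)]
    ring

lemma kap_zero_nonneg (p q : ℕ) : 0 ≤ kap p q 0 := by
  rcases Nat.even_or_odd q with ⟨r, hr⟩ | hodd
  · have : q = 2 * r := by omega
    rw [this]
    exact kap_sos p r
  · rw [kap_parity p q 0 (by simpa using (Nat.not_even_iff_odd.mpr hodd))]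

/-- elementary symmetric function coefficients of ∏ (1 + y z) as `ℤ`-indexed function -/
def Ee : List ℝ → ℤ → ℝ
  | [], d => if d = 0 then 1 else 0
  | y :: l, d => Ee l d + y * Ee l (d - 1)

lemma Ee_eq_zero (l : List ℝ) (d : ℤ) (h : d < 0 ∨ (l.length : ℤ) < d) : Ee l d = 0 := by
  induction l generalizing d with
  | nil =>
    simp only [Ee, List.length_nil] at *
    rw [if_neg (by omega)]
  | cons y t ih =>
    simp only [Ee, List.length_cons] at *
    rw [ih d (by push_cast at h ⊢; omega), ih (d-1) (by push_cast at h ⊢; omega)]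
    ring

noncomputable def MM (p q : ℕ) (l : List ℝ) (σ : ℤ) : ℝ :=
  ∑ a ∈ Finset.Icc (0:ℤ) l.length, kap p q (2*a - σ) * (Ee l a * Ee l (σ - a))

lemma sum_ext (f : ℤ → ℝ) (A B A' B' : ℤ) (hA : A' ≤ A) (hB : B ≤ B')
    (h0 : ∀ a, a < A ∨ B < a → f a = 0) :
    ∑ a ∈ Finset.Icc A B, f a = ∑ a ∈ Finset.Icc A' B', f a := by
  apply Finset.sum_subset (Finset.Icc_subset_Icc hA hB)
  intro x hx hnx
  rw [Finset.mem_Icc] at hx hnx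
  exact h0 x (by omega)

lemma sum_shift (f : ℤ → ℝ) (A B s : ℤ) :
    ∑ a ∈ Finset.Icc A B, f (a + s) = ∑ a ∈ Finset.Icc (A+s) (B+s), f a := by
  rw [← Finset.map_add_right_Icc A B s, Finset.sum_map]
  rfl

lemma MM_eq (p q : ℕ) (l : List ℝ) (σ : ℤ) (A B : ℤ) (hA : A ≤ 0) (hB : (l.length:ℤ) ≤ B) :
    MM p q l σ = ∑ a ∈ Finset.Icc A B, kap p q (2*a - σ) * (Ee l a * Ee l (σ - a)) := by
  rw [MM]
  apply sum_ext _ _ _ _ _ (by omega) hB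
  intro a ha
  rw [Ee_eq_zero l a (by omega)]
  ring

lemma kEE_congr (p q : ℕ) (l : List ℝ) {X X' Y Y' Z Z' : ℤ} (hX : X = X') (hY : Y = Y')
    (hZ : Z = Z') :
    kap p q X * (Ee l Y * Ee l Z) = kap p q X' * (Ee l Y' * Ee l Z') := by
  rw [hX, hY, hZ]

lemma MM_cons (p q : ℕ) (y : ℝ) (l : List ℝ) (σ : ℤ) :
    MM p q (y :: l) σ = MM p q l σ + y * MM p (q+1) l (σ-1) + y^2 * MM p q l (σ-2) := by
  set d : ℤ := (l.length : ℤ) with hd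
  have hd0 : 0 ≤ d := Int.natCast_nonneg _
  have hlen : ((y::l).length : ℤ) = d + 1 := by simp [hd]
  have h1 : MM p q (y::l) σ = ∑ a ∈ Finset.Icc (-3 : ℤ) (d+1),
      kap p q (2*a - σ) * (Ee (y::l) a * Ee (y::l) (σ - a)) := by
    apply MM_eq p q _ σ (-3) (d+1) (by omega) (le_of_eq hlen)
  rw [h1]
  have hsplit : ∀ a : ℤ, kap p q (2*a - σ) * (Ee (y::l) a * Ee (y::l) (σ - a)) =
      kap p q (2*a - σ) * (Ee l a * Ee l (σ - a))
      + y * (kap p q (2*a - σ) * (Ee l a * Ee l (σ - 1 - a))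
             + kap p q (2*a - σ) * (Ee l (a-1) * Ee l (σ - a)))
      + y^2 * (kap p q (2*a - σ) * (Ee l (a-1) * Ee l (σ - a - 1))) := by
    intro a
    simp only [Ee]
    have : σ - a - 1 = σ - 1 - a := by ring
    rw [this]
    ring
  have hs0 : ∑ a ∈ Finset.Icc (-3 : ℤ) (d+1),
      kap p q (2*a - σ) * (Ee (y::l) a * Ee (y::l) (σ - a)) =
      ∑ a ∈ Finset.Icc (-3 : ℤ) (d+1), (kap p q (2*a - σ) * (Ee l a * Ee l (σ - a))
      + y * (kap p q (2*a - σ) * (Ee l a * Ee l (σ - 1 - a))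
             + kap p q (2*a - σ) * (Ee l (a-1) * Ee l (σ - a)))
      + y^2 * (kap p q (2*a - σ) * (Ee l (a-1) * Ee l (σ - a - 1)))) :=
    Finset.sum_congr rfl (fun a _ => hsplit a)
  rw [hs0, Finset.sum_add_distrib, Finset.sum_add_distrib]
  congr 1
  · congr 1
    · -- first piece = MM p q l σ
      rw [MM_eq p q l σ (-3) (d+1) (by omega) (by omega)]
    · -- cross terms
      rw [← Finset.mul_sum, Finset.sum_add_distrib]
      -- reindex the second cross sum
      have hre : ∑ a ∈ Finset.Icc (-3:ℤ) (d+1), kap p q (2*a - σ) * (Ee l (a-1) * Ee l (σ - a)) =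
          ∑ a ∈ Finset.Icc (-4:ℤ) d, kap p q (2*a + 2 - σ) * (Ee l a * Ee l (σ - 1 - a)) := by
        have hsh := sum_shift (fun b => kap p q (2*b + 2 - σ) * (Ee l b * Ee l (σ - 1 - b))) (-3) (d+1) (-1)
        rw [show (-3:ℤ) + -1 = -4 by norm_num, show d + 1 + -1 = d by ring] at hsh
        rw [← hsh]
        apply Finset.sum_congr rfl
        intro a _
        exact kEE_congr p q l (by ring) (by ring) (by ring)
      rw [hre]
      -- align ranges to Icc (-4) (d+1) and combine
      have ha1 : ∑ a ∈ Finset.Icc (-3:ℤ) (d+1), kap p q (2*a - σ) * (Ee l a * Ee l (σ - 1 - a)) =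
          ∑ a ∈ Finset.Icc (-4:ℤ) (d+1), kap p q (2*a - σ) * (Ee l a * Ee l (σ - 1 - a)) := by
        apply sum_ext _ _ _ _ _ (by omega) (by omega)
        intro a ha
        rw [Ee_eq_zero l a (by omega)]
        ring
      have ha2 : ∑ a ∈ Finset.Icc (-4:ℤ) d, kap p q (2*a + 2 - σ) * (Ee l a * Ee l (σ - 1 - a)) =
          ∑ a ∈ Finset.Icc (-4:ℤ) (d+1), kap p q (2*a + 2 - σ) * (Ee l a * Ee l (σ - 1 - a)) := by
        apply sum_ext _ _ _ _ _ (by omega) (by omega)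
        intro a ha
        rw [Ee_eq_zero l a (by omega)]
        ring
      rw [ha1, ha2, ← Finset.sum_add_distrib,
        MM_eq p (q+1) l (σ-1) (-4) (d+1) (by omega) (by omega)]
      congr 1
      apply Finset.sum_congr rfl
      intro a _
      rw [kap_rec p q (2*a - (σ-1))]
      have e1 : 2*a - (σ-1) - 1 = 2*a - σ := by ring
      have e2 : 2*a - (σ-1) + 1 = 2*a + 2 - σ := by ring
      rw [e1, e2]
      ring
  · -- y^2 part
    rw [← Finset.mul_sum]
    congr 1
    have hs := sum_shift (fun b => kap p q (2*b + 2 - σ) * (Ee l b * Ee l (σ - b - 2))) (-3) (d+1) (-1)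
    have hc : ∑ a ∈ Finset.Icc (-3:ℤ) (d+1), kap p q (2*a - σ) * (Ee l (a-1) * Ee l (σ - a - 1)) =
        ∑ a ∈ Finset.Icc (-3:ℤ) (d+1),
          kap p q (2*(a + -1) + 2 - σ) * (Ee l (a + -1) * Ee l (σ - (a + -1) - 2)) := by
      apply Finset.sum_congr rfl
      intro a _
      exact kEE_congr p q l (by ring) (by ring) (by ring)
    rw [hc, hs, MM_eq p q l (σ-2) (-4) (d) (by omega) (by omega)]
    have : (-3 : ℤ) + -1 = -4 := by ring
    rw [this]
    have : d + 1 + -1 = d := by ring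
    rw [this]
    apply Finset.sum_congr rfl
    intro a _
    exact kEE_congr p q l (by ring) (by ring) (by ring)

end PartB

section PartC
open LkpAux LkpAux2 Finset

lemma MM_nil (p q : ℕ) (σ : ℤ) : MM p q [] σ = if σ = 0 then kap p q 0 else 0 := by
  rw [MM]
  simp only [List.length_nil, Nat.cast_zero]
  rw [Finset.Icc_self, Finset.sum_singleton]
  simp only [Ee]
  by_cases h : σ = 0
  · subst h; norm_num
  · rw [if_neg h, if_neg (by omega : ¬ σ - 0 = 0)]
    ring

lemma MM_nonneg (p : ℕ) (l : List ℝ) (hl : ∀ y ∈ l, 0 ≤ y) : ∀ (q : ℕ) (σ : ℤ),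
    0 ≤ MM p q l σ := by
  induction l with
  | nil =>
    intro q σ
    rw [MM_nil]
    split
    · exact kap_zero_nonneg p q
    · exact le_rfl
  | cons y t ih =>
    intro q σ
    have hy : 0 ≤ y := hl y List.mem_cons_self
    have ht : ∀ z ∈ t, 0 ≤ z := fun z hz => hl z (List.mem_cons_of_mem y hz)
    rw [MM_cons]
    have h1 := ih ht q σ
    have h2 := ih ht (q+1) (σ-1)
    have h3 := ih ht q (σ-2)
    have hy2 : (0:ℝ) ≤ y^2 := sq_nonneg y
    nlinarith

lemma kap_zero_vanish (p : ℕ) (d : ℤ) (h : d < -(2*(p:ℤ)) ∨ (2*(p:ℤ)) < d) : kap p 0 d = 0 := by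
  rcases Int.even_or_odd d with ⟨j, hj⟩ | hodd
  · have : d = 2*j := by omega
    rw [this, kap_zero_even, chR]
    by_cases h0 : 0 ≤ (p:ℤ) + j
    · rw [if_pos h0, Nat.choose_eq_zero_of_lt (by omega), Nat.cast_zero, mul_zero]
    · rw [if_neg h0, mul_zero]
  · apply kap_zero_odd
    intro hc
    rcases hc with ⟨c, hc⟩
    obtain ⟨e, he⟩ := hodd
    omega

lemma chR_symm (p : ℕ) (j : ℤ) : chR p ((p:ℤ) + j) = chR p ((p:ℤ) - j) := by
  unfold chR
  by_cases h1 : 0 ≤ (p:ℤ) + j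
  · by_cases h2 : 0 ≤ (p:ℤ) - j
    · rw [if_pos h1, if_pos h2]
      congr 1
      have hj1 : ((p:ℤ) + j).toNat + ((p:ℤ) - j).toNat = 2*p := by omega
      have hsy := Nat.choose_symm (n := 2*p) (k := ((p:ℤ)+j).toNat) (by omega)
      rw [← hsy]
      congr 1
      omega
    · rw [if_pos h1, if_neg h2, Nat.choose_eq_zero_of_lt (by omega), Nat.cast_zero]
  · by_cases h2 : 0 ≤ (p:ℤ) - j
    · rw [if_neg h1, if_pos h2, Nat.choose_eq_zero_of_lt (by omega), Nat.cast_zero]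
    · rw [if_neg h1, if_neg h2]

lemma sum_reflect (f : ℤ → ℝ) (A B : ℤ) :
    ∑ a ∈ Finset.Icc A B, f a = ∑ a ∈ Finset.Icc (-B) (-A), f (-a) := by
  refine Finset.sum_nbij' (fun a => -a) (fun a => -a) ?_ ?_ ?_ ?_ ?_
  · intro a ha; rw [Finset.mem_Icc] at ha ⊢; omega
  · intro a ha; rw [Finset.mem_Icc] at ha ⊢; omega
  · intro a _; omega
  · intro a _; omega
  · intro a _; rw [neg_neg]

lemma sum_Icc_int_nat (f : ℤ → ℝ) (P : ℕ) :
    ∑ j ∈ Finset.Icc (1:ℤ) (P:ℤ), f j = ∑ j ∈ Finset.Icc 1 P, f (j:ℤ) := by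
  refine Finset.sum_nbij' (fun a => a.toNat) (fun a => (a:ℤ)) ?_ ?_ ?_ ?_ ?_
  · intro a ha; rw [Finset.mem_Icc] at ha ⊢; omega
  · intro a ha; rw [Finset.mem_Icc] at ha ⊢; omega
  · intro a ha; rw [Finset.mem_Icc] at ha; omega
  · intro a _; omega
  · intro a ha; rw [Finset.mem_Icc] at ha; congr 1; omega

lemma choose_half (p : ℕ) (hp : 0 < p) : ((2*p).choose p) = 2 * ((2*p-1).choose p) := by
  obtain ⟨P, rfl⟩ : ∃ P, p = P + 1 := ⟨p - 1, by omega⟩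
  have e2 : 2*(P+1) - 1 = 2*P+1 := by omega
  have e1 : 2*(P+1) = (2*P+1) + 1 := by ring
  rw [e2, e1, Nat.choose_succ_succ]
  have hsy := Nat.choose_symm (show P+1 ≤ 2*P+1 by omega)
  rw [show (2*P+1) - (P+1) = P by omega] at hsy
  rw [hsy]
  ring

lemma MM_translate (p : ℕ) (hp : 0 < p) (l : List ℝ) (m : ℤ) :
    MM p 0 l (2*m)
      = 2 * (((2*p-1).choose p : ℝ) * (Ee l m)^2
        + ∑ j ∈ Finset.Icc 1 p, (-1:ℝ)^j * ((2*p).choose (p-j) : ℝ) * Ee l (m - j) * Ee l (m + j)) := by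
  set d : ℤ := (l.length : ℤ) with hd
  have hd0 : 0 ≤ d := Int.natCast_nonneg _
  -- move to range Icc (m-p) (m+p)
  have step1 : MM p 0 l (2*m) = ∑ a ∈ Finset.Icc (m-p) (m+p),
      kap p 0 (2*a - 2*m) * (Ee l a * Ee l (2*m - a)) := by
    rw [MM_eq p 0 l (2*m) (min 0 (m-p) - 1) (max d (m+p) + 1) (by omega) (by omega)]
    symm
    apply sum_ext _ _ _ _ _ (by omega) (by omega)
    intro a ha
    rw [kap_zero_vanish p _ (by omega)]
    ring
  rw [step1]
  -- shift range to Icc (-p) p  : a = b + m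
  have step2 : ∑ a ∈ Finset.Icc (m-(p:ℤ)) (m+p), kap p 0 (2*a - 2*m) * (Ee l a * Ee l (2*m - a))
      = ∑ b ∈ Finset.Icc (-(p:ℤ)) p, kap p 0 (2*b) * (Ee l (m + b) * Ee l (m - b)) := by
    have hsh := sum_shift (fun a => kap p 0 (2*a - 2*m) * (Ee l a * Ee l (2*m - a))) (-(p:ℤ)) p m
    rw [show -(p:ℤ) + m = m - p by ring, show (p:ℤ) + m = m + p by ring] at hsh
    rw [← hsh]
    apply Finset.sum_congr rfl
    intro b _
    exact kEE_congr p 0 l (by ring) (by ring) (by ring)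
  rw [step2]
  -- evaluate kappa and split the range
  have hsplitrange : Finset.Icc (-(p:ℤ)) p =
      (Finset.Icc (-(p:ℤ)) (-1)) ∪ (insert (0:ℤ) (Finset.Icc 1 p)) := by
    ext x
    simp only [Finset.mem_Icc, Finset.mem_union, Finset.mem_insert]
    omega
  have hdisj : Disjoint (Finset.Icc (-(p:ℤ)) (-1)) (insert (0:ℤ) (Finset.Icc 1 p)) := by
    rw [Finset.disjoint_left]
    intro x hx hx'
    simp only [Finset.mem_Icc, Finset.mem_insert] at hx hx'
    omega
  rw [hsplitrange, Finset.sum_union hdisj, Finset.sum_insert (by simp)]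
  -- reflect the negative part
  have hneg : ∑ b ∈ Finset.Icc (-(p:ℤ)) (-1), kap p 0 (2*b) * (Ee l (m + b) * Ee l (m - b))
      = ∑ b ∈ Finset.Icc (1:ℤ) p, kap p 0 (2*b) * (Ee l (m - b) * Ee l (m + b)) := by
    rw [sum_reflect _ (-(p:ℤ)) (-1)]
    rw [show -(-1:ℤ) = 1 by norm_num, show -(-(p:ℤ)) = (p:ℤ) by ring]
    apply Finset.sum_congr rfl
    intro b _
    rw [kap_zero_even p (-b), sg_neg, show (p:ℤ) + -b = p - b by ring, ← chR_symm,
      ← kap_zero_even p b]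
    exact kEE_congr p 0 l (by ring) (by ring) (by ring)
  rw [hneg]
  -- the zero term
  have hzero : kap p 0 (2*0) * (Ee l (m + 0) * Ee l (m - 0))
      = ((2*p).choose p : ℝ) * (Ee l m)^2 := by
    rw [kap_zero_even]
    simp only [sg, add_zero, sub_zero]
    rw [if_pos (Even.zero), chR, if_pos (Int.natCast_nonneg p)]
    have : ((p:ℤ)).toNat = p := by omega
    rw [this]
    ring
  rw [hzero]
  -- positive part terms
  have hpos : ∑ b ∈ Finset.Icc (1:ℤ) p, kap p 0 (2*b) * (Ee l (m - b) * Ee l (m + b))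
      = ∑ j ∈ Finset.Icc 1 p, (-1:ℝ)^j * ((2*p).choose (p-j) : ℝ) * Ee l (m - j) * Ee l (m + j) := by
    rw [sum_Icc_int_nat (fun b => kap p 0 (2*b) * (Ee l (m - b) * Ee l (m + b))) p]
    apply Finset.sum_congr rfl
    intro j hj
    rw [Finset.mem_Icc] at hj
    rw [kap_zero_even, sg_natCast, chR]
    rw [if_pos (by omega : (0:ℤ) ≤ (p:ℤ) + (j:ℕ)), show (((p:ℤ) + (j:ℕ)).toNat) = p + j by omega]
    have hcs : (2*p).choose (p+j) = (2*p).choose (p-j) := by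
      have hsy := Nat.choose_symm (show p + j ≤ 2*p by omega)
      rw [show 2*p - (p+j) = p - j by omega] at hsy
      rw [← hsy]
    rw [hcs]
    ring
  have hflip : ∑ b ∈ Finset.Icc (1:ℤ) p, kap p 0 (2*b) * (Ee l (m + b) * Ee l (m - b))
      = ∑ b ∈ Finset.Icc (1:ℤ) p, kap p 0 (2*b) * (Ee l (m - b) * Ee l (m + b)) :=
    Finset.sum_congr rfl fun b _ => by ring
  rw [hflip, hpos]
  have hch : ((2*p).choose p : ℝ) = 2 * ((2*p-1).choose p : ℝ) := by
    rw [choose_half p hp]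
    push_cast
    ring
  rw [hch]
  ring

end PartC

section PartD
open Polynomial Finset LkpAux LkpAux2

lemma coeff_prod_list (xs : List ℝ) (k : ℕ) :
    ((xs.map (fun y => Polynomial.X + Polynomial.C y)).prod).coeff k
      = Ee xs ((xs.length : ℤ) - k) := by
  induction xs generalizing k with
  | nil =>
    simp only [List.map_nil, List.prod_nil, List.length_nil, Nat.cast_zero, zero_sub,
      Polynomial.coeff_one, Ee]
    by_cases h : k = 0
    · subst h; norm_num
    · rw [if_neg h, if_neg (by omega : ¬ -(k:ℤ) = 0)]
  | cons y t ih =>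
    simp only [List.map_cons, List.prod_cons, List.length_cons]
    rw [add_mul, Polynomial.coeff_add, Polynomial.coeff_C_mul]
    simp only [Ee]
    cases k with
    | zero =>
      rw [Polynomial.mul_coeff_zero, Polynomial.coeff_X_zero, zero_mul, zero_add, ih 0]
      push_cast
      rw [show (t.length:ℤ) - 0 = (t.length:ℤ) from by ring,
        show (t.length:ℤ) + 1 - 0 - 1 = (t.length:ℤ) from by ring,
        show (t.length:ℤ) + 1 - 0 = (t.length:ℤ) + 1 from by ring,
        Ee_eq_zero t ((t.length:ℤ) + 1) (by omega)]
      ring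
    | succ k' =>
      rw [Polynomial.coeff_X_mul, ih k', ih (k'+1)]
      push_cast
      rw [show (t.length:ℤ) + 1 - ((k':ℤ)+1) = (t.length:ℤ) - k' from by ring,
        show (t.length:ℤ) - ((k':ℤ)+1) = (t.length:ℤ) - (k':ℤ) - 1 from by ring]

lemma listprod_map (L : List ℂ) (h : ∀ z ∈ L, ∃ x : ℝ, x < 0 ∧ z = (x:ℂ)) :
    (L.map (fun z => Polynomial.X - Polynomial.C z)).prod
      = Polynomial.map (algebraMap ℝ ℂ) ((L.map (fun z => Polynomial.X + Polynomial.C (-z.re))).prod) := by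
  induction L with
  | nil => simp
  | cons z t ih =>
    simp only [List.map_cons, List.prod_cons]
    rw [Polynomial.map_mul, ← ih (fun w hw => h w (List.mem_cons_of_mem z hw))]
    congr 1
    obtain ⟨x, hx, rfl⟩ := h z List.mem_cons_self
    rw [Polynomial.map_add, Polynomial.map_X, Polynomial.map_C]
    simp only [Complex.ofReal_re]
    rw [sub_eq_add_neg, ← Polynomial.C_neg]
    norm_num [Complex.ofReal_neg]

end PartD

open Polynomial Finset LkpAux LkpAux2

/-- If `∑_{k=0}^n a_k z^k` has all zeros real and negative, then every coefficient
`L_k^p = C(2p-1,p) a_k² + ∑_{j=1}^p (-1)^j C(2p,p-j) a_{k-j} a_{k+j}` is nonnegative. -/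
theorem Lkp_nonneg (n p : ℕ) (hp : 0 < p) (a : ℤ → ℝ)
    (ha : ∀ k : ℤ, (k < 0 ∨ (n : ℤ) < k) → a k = 0)
    (hroots : ∀ z : ℂ,
      (∑ k ∈ Finset.range (n + 1), (a (k : ℤ) : ℂ) * z ^ k) = 0 →
      ∃ x : ℝ, x < 0 ∧ z = (x : ℂ)) :
    ∀ k ∈ Finset.range (n + 1),
      0 ≤ ((2 * p - 1).choose p : ℝ) * (a (k : ℤ)) ^ 2 +
          ∑ j ∈ Finset.Icc 1 p,
            (-1 : ℝ) ^ j * ((2 * p).choose (p - j) : ℝ) *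
              a ((k : ℤ) - j) * a ((k : ℤ) + j) := by
  classical
  intro k hk
  rw [Finset.mem_range] at hk
  set P : Polynomial ℂ := ∑ i ∈ Finset.range (n+1), Polynomial.C ((a i : ℝ) : ℂ) * X ^ i with hP
  have heval : ∀ z : ℂ, P.eval z = ∑ i ∈ Finset.range (n+1), (a i : ℂ) * z ^ i := by
    intro z
    rw [hP, Polynomial.eval_finset_sum]
    refine Finset.sum_congr rfl fun i _ => ?_
    rw [Polynomial.eval_mul, Polynomial.eval_C, Polynomial.eval_pow, Polynomial.eval_X]
  have hdeg : P.natDegree ≤ n := by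
    rw [hP]
    apply Polynomial.natDegree_sum_le_of_forall_le
    intro i hi
    rw [Finset.mem_range] at hi
    exact le_trans (Polynomial.natDegree_C_mul_X_pow_le _ _) (by omega)
  have hcoeff : ∀ i : ℕ, i ≤ n → P.coeff i = ((a i : ℝ) : ℂ) := by
    intro i hi
    rw [hP, Polynomial.finset_sum_coeff]
    rw [Finset.sum_eq_single i]
    · rw [Polynomial.coeff_C_mul, Polynomial.coeff_X_pow, if_pos rfl, mul_one]
    · intro b _ hbne
      rw [Polynomial.coeff_C_mul, Polynomial.coeff_X_pow, if_neg (Ne.symm hbne), mul_zero]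
    · intro hni
      exact absurd (Finset.mem_range.mpr (by omega)) hni
  have hPne : P ≠ 0 := by
    intro h0
    obtain ⟨x, hx, hx1⟩ := hroots 1 (by rw [← heval 1, h0]; simp)
    have : (1:ℝ) = x := by exact_mod_cast hx1
    linarith
  have hsplits : P.Splits := IsAlgClosed.splits P
  set d := P.natDegree with hdd
  have hcard : P.roots.card = d := by
    have := hsplits.natDegree_eq_card_roots
    rwa [eq_comm] at this
  have hform : P = Polynomial.C P.leadingCoeff * (P.roots.map (fun z => X - Polynomial.C z)).prod :=
    hsplits.eq_prod_roots
  have hrootneg : ∀ z ∈ P.roots, ∃ x : ℝ, x < 0 ∧ z = (x:ℂ) := by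
    intro z hz
    apply hroots z
    rw [← heval]
    exact ((Polynomial.mem_roots'.mp hz).2 : P.eval z = 0)
  set L : List ℂ := P.roots.toList with hL
  have hLmem : ∀ z ∈ L, ∃ x : ℝ, x < 0 ∧ z = (x:ℂ) := by
    intro z hz
    exact hrootneg z (by rwa [← Multiset.mem_toList])
  set xs : List ℝ := L.map (fun z => -z.re) with hxs
  have hxs_nonneg : ∀ y ∈ xs, 0 ≤ y := by
    intro y hy
    rw [hxs, List.mem_map] at hy
    obtain ⟨z, hz, rfl⟩ := hy
    obtain ⟨x, hx, rfl⟩ := hLmem z hz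
    simp only [Complex.ofReal_re]
    linarith
  have hxslen : xs.length = d := by
    rw [hxs, List.length_map, hL, Multiset.length_toList, hcard]
  -- product identification
  set Q : Polynomial ℝ := (xs.map (fun y => Polynomial.X + Polynomial.C y)).prod with hQ
  have h1 : P.roots.map (fun z => X - Polynomial.C z)
      = ((L.map (fun z => X - Polynomial.C z) : List (Polynomial ℂ)) : Multiset (Polynomial ℂ)) := by
    rw [hL, ← Multiset.map_coe, Multiset.coe_toList]
  have hprodQ : (Multiset.map (fun z => X - Polynomial.C z) P.roots).prod
      = Polynomial.map (algebraMap ℝ ℂ) Q := by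
    rw [h1, Multiset.prod_coe, listprod_map L hLmem, hQ, hxs, List.map_map]
    rfl
  have hPQ : P = Polynomial.C P.leadingCoeff * Polynomial.map (algebraMap ℝ ℂ) Q := by
    rw [← hprodQ]
    exact hform
  have hQcoeff : ∀ i : ℕ, Q.coeff i = Ee xs ((d:ℤ) - i) := by
    intro i
    rw [hQ, coeff_prod_list, hxslen]
  -- leading coefficient is real
  set c : ℝ := a d with hc
  have hlead : P.leadingCoeff = ((c : ℝ) : ℂ) := by
    have h0 : P.leadingCoeff = P.coeff P.natDegree := rfl
    rw [h0, ← hdd, hcoeff d hdeg, hc]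
  -- the key identity
  have hkey : ∀ m : ℤ, a m = c * Ee xs ((d:ℤ) - m) := by
    intro m
    by_cases hm1 : m < 0
    · rw [ha m (Or.inl hm1), Ee_eq_zero xs ((d:ℤ) - m) (by rw [hxslen]; omega)]
      ring
    · by_cases hm2 : (n:ℤ) < m
      · rw [ha m (Or.inr hm2), Ee_eq_zero xs ((d:ℤ) - m) (by rw [hxslen]; omega)]
        ring
      · -- 0 ≤ m ≤ n
        have hi : m = ((m.toNat : ℕ) : ℤ) := by omega
        have him : m.toNat ≤ n := by omega
        have h1 : P.coeff m.toNat = ((a m.toNat : ℝ) : ℂ) := hcoeff m.toNat him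
        have h2 : P.coeff m.toNat = ((c : ℝ):ℂ) * ((Q.coeff m.toNat : ℝ) : ℂ) := by
          rw [hPQ, Polynomial.coeff_C_mul, Polynomial.coeff_map, hlead]
          rfl
        rw [h1, hQcoeff m.toNat] at h2
        have h3 : a ((m.toNat : ℕ) : ℤ) = c * Ee xs ((d:ℤ) - m.toNat) := by exact_mod_cast h2
        rw [hi]
        exact h3
  -- now conclude
  set m : ℤ := (d:ℤ) - k with hm
  have hMM := MM_nonneg p xs hxs_nonneg 0 (2*m)
  rw [MM_translate p hp xs m] at hMM
  have hbr : 0 ≤ ((2*p-1).choose p : ℝ) * (Ee xs m)^2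
      + ∑ j ∈ Finset.Icc 1 p, (-1:ℝ)^j * ((2*p).choose (p-j) : ℝ) * Ee xs (m - j) * Ee xs (m + j) := by
    nlinarith [hMM]
  have h0 : a (k:ℤ) = c * Ee xs m := by
    rw [hkey (k:ℤ), hm]
  have hterm : ∀ j : ℕ, (-1:ℝ)^j * ((2*p).choose (p-j) : ℝ) * a ((k:ℤ) - j) * a ((k:ℤ) + j)
      = c^2 * ((-1:ℝ)^j * ((2*p).choose (p-j) : ℝ) * Ee xs (m - j) * Ee xs (m + j)) := by
    intro j
    rw [hkey ((k:ℤ) - j), hkey ((k:ℤ) + j),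
      show (d:ℤ) - ((k:ℤ) - j) = m + j from by rw [hm]; ring,
      show (d:ℤ) - ((k:ℤ) + j) = m - j from by rw [hm]; ring]
    ring
  have hexpr : ((2 * p - 1).choose p : ℝ) * (a (k:ℤ)) ^ 2 +
      ∑ j ∈ Finset.Icc 1 p, (-1 : ℝ) ^ j * ((2 * p).choose (p - j) : ℝ) *
        a ((k : ℤ) - j) * a ((k : ℤ) + j)
      = c^2 * (((2*p-1).choose p : ℝ) * (Ee xs m)^2
        + ∑ j ∈ Finset.Icc 1 p, (-1:ℝ)^j * ((2*p).choose (p-j) : ℝ) * Ee xs (m - j) * Ee xs (m + j)) := by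
    rw [h0, Finset.sum_congr rfl (fun j _ => hterm j), ← Finset.mul_sum]
    ring
  rw [hexpr]
  exact mul_nonneg (sq_nonneg c) hbr
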